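/- Let Ψ(u) = u^{1+α} L(u) with L slowly varying at 0 and α ∈ (0,1], and suppose ∫^∞ du/Ψ(u) < ∞. Let v(t) = u(t,+∞) be the minimal solution of ∂_t v = −Ψ(v) with v(0+) = +∞ (i.e. ∫_{v(t)}^∞ du/Ψ(u) = t). Then v(r)^α L(v(r)) ∼ 1/(α r) as r → ∞. -/

import Mathlib

open Set MeasureTheory Filter

lemma uct (h : ℝ → ℝ) (hc : Continuous h)
    (hp : ∀ s ∈ Icc (0:ℝ) 2, Tendsto (fun t => h (t + s) - h t) atTop (nhds 0)) :
    ∀ ε > (0:ℝ), ∃ T : ℝ, ∀ t ≥ T, ∀ s ∈ Icc (0:ℝ) 1, |h (t + s) - h t| ≤ ε := by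
  intro ε hε
  have hε₁ : (0:ℝ) < ε / 3 := by linarith
  haveI : CompleteSpace (Icc (0:ℝ) 2) := isClosed_Icc.completeSpace_coe
  set E : ℕ → Set (Icc (0:ℝ) 2) :=
    fun n => {s | ∀ t : ℝ, (n:ℝ) ≤ t → |h (t + ↑s) - h t| ≤ ε / 3} with hE
  have hEc : ∀ n, IsClosed (E n) := by
    intro n
    have he : E n = ⋂ (t : ℝ) (_ : (n:ℝ) ≤ t),
        {s : Icc (0:ℝ) 2 | |h (t + ↑s) - h t| ≤ ε / 3} := by
      ext s; simp [hE]
    rw [he]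
    refine isClosed_iInter fun t => isClosed_iInter fun _ => ?_
    exact isClosed_le (((hc.comp (continuous_const.add continuous_subtype_val)).sub
      continuous_const).abs) continuous_const
  have hcover : ⋃ n, E n = univ := by
    ext s
    simp only [mem_iUnion, mem_univ, iff_true]
    obtain ⟨T, hT⟩ := Metric.tendsto_atTop.1 (hp ↑s s.2) (ε/3) hε₁
    obtain ⟨n, hn⟩ := exists_nat_ge T
    exact ⟨n, fun t ht => le_of_lt (by simpa [Real.dist_eq] using hT t (le_trans hn ht))⟩
  haveI : Nonempty (Icc (0:ℝ) 2) := ⟨⟨0, by norm_num, by norm_num⟩⟩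
  obtain ⟨N, x, hx⟩ := nonempty_interior_of_iUnion_of_closed hEc hcover
  obtain ⟨r, hr, hball⟩ := Metric.isOpen_iff.1 isOpen_interior x hx
  have hballE : ∀ s : Icc (0:ℝ) 2, dist s x < r → s ∈ E N :=
    fun s hs => interior_subset (hball hs)
  set x₀ : ℝ := ↑x with hx₀def
  have hx₀ : x₀ ∈ Icc (0:ℝ) 2 := x.2
  set a : ℝ := max 0 (x₀ - r/3) with hadef
  set b : ℝ := min 2 (x₀ + r/3) with hbdef
  have ha0 : 0 ≤ a := le_max_left _ _
  have hb2 : b ≤ 2 := min_le_left _ _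
  have hax : a ≤ x₀ := max_le hx₀.1 (by linarith)
  have hxb : x₀ ≤ b := le_min hx₀.2 (by linarith)
  have hab : a < b := by
    rcases le_or_gt (x₀ + r/3) 2 with h2 | h2
    · have hb : b = x₀ + r/3 := min_eq_right h2
      rw [hb]; linarith
    · have hb : b = 2 := min_eq_left h2.le
      rw [hb]
      apply max_lt (by norm_num)
      linarith [hx₀.2]
  have hmem : ∀ s ∈ Icc a b, ∀ t : ℝ, (N:ℝ) ≤ t → |h (t + s) - h t| ≤ ε/3 := by
    intro s hs t ht
    have hs02 : s ∈ Icc (0:ℝ) 2 := ⟨le_trans ha0 hs.1, le_trans hs.2 hb2⟩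
    have hd : dist (⟨s, hs02⟩ : Icc (0:ℝ) 2) x < r := by
      rw [Subtype.dist_eq]
      have h1 : x₀ - r/3 ≤ a := le_max_right _ _
      have h2 : b ≤ x₀ + r/3 := min_le_right _ _
      have : |s - x₀| ≤ r/3 := abs_le.2 ⟨by linarith [hs.1], by linarith [hs.2]⟩
      calc dist s x₀ = |s - x₀| := Real.dist_eq s x₀
        _ ≤ r/3 := this
        _ < r := by linarith
    exact hballE _ hd t ht
  have ha2 : a ≤ 2 := le_trans hax hx₀.2
  have hP2 : ∀ y ∈ Icc (0:ℝ) (b - a), ∀ t : ℝ, (N:ℝ) + 2 ≤ t →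
      |h (t + y) - h t| ≤ 2*(ε/3) := by
    intro y hy t ht
    have h1 := hmem (a + y) ⟨le_add_of_nonneg_right hy.1, by linarith [hy.2]⟩ (t - a)
      (by linarith)
    have h2 := hmem a ⟨le_refl a, hab.le⟩ (t - a) (by linarith)
    have e1 : t - a + (a + y) = t + y := by ring
    have e2 : t - a + a = t := by ring
    rw [e1] at h1; rw [e2] at h2
    have : h (t + y) - h t = (h (t+y) - h (t-a)) - (h t - h (t-a)) := by ring
    rw [this]
    calc |(h (t+y) - h (t-a)) - (h t - h (t-a))|
        ≤ |h (t+y) - h (t-a)| + |h t - h (t-a)| := abs_sub _ _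
      _ ≤ ε/3 + ε/3 := add_le_add h1 h2
      _ = 2*(ε/3) := by ring
  set c : ℝ := min (b - a) 1 with hcdef
  have hc0 : 0 < c := lt_min (by linarith) one_pos
  have hc1 : c ≤ 1 := min_le_right _ _
  set K : ℕ := ⌊1/c⌋₊ with hKdef
  have hjc2 : ∀ j : ℕ, j ≤ K → (j:ℝ) * c ∈ Icc (0:ℝ) 2 := by
    intro j hj
    constructor
    · positivity
    · have h1 : (j:ℝ) ≤ (K:ℝ) := by exact_mod_cast hj
      have h2 : (K:ℝ) ≤ 1/c := Nat.floor_le (by positivity)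
      have : (j:ℝ) * c ≤ (1/c) * c := by
        apply mul_le_mul_of_nonneg_right (le_trans h1 h2) hc0.le
      rw [one_div_mul_cancel hc0.ne'] at this
      linarith
  have hfin : ∀ᶠ t : ℝ in atTop, ∀ j ∈ Finset.range (K+1), |h (t + j*c) - h t| ≤ ε/3 := by
    rw [eventually_all_finset]
    intro j hj
    have hjK : j ≤ K := Nat.lt_succ_iff.1 (Finset.mem_range.1 hj)
    have := (hp ((j:ℝ)*c) (hjc2 j hjK)).eventually (Metric.closedBall_mem_nhds (0:ℝ) hε₁)
    simpa [Metric.mem_closedBall, Real.dist_eq] using this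
  obtain ⟨T₂, hT₂⟩ := eventually_atTop.1 hfin
  refine ⟨max ((N:ℝ) + 2) T₂, fun t ht s hs => ?_⟩
  have htN : (N:ℝ) + 2 ≤ t := le_trans (le_max_left _ _) ht
  have htT₂ : T₂ ≤ t := le_trans (le_max_right _ _) ht
  set j : ℕ := ⌊s/c⌋₊ with hjdef
  have hjK : j ≤ K := by
    apply Nat.floor_le_floor
    gcongr
    exact hs.2
  have hjs : (j:ℝ) * c ≤ s := by
    have := Nat.floor_le (div_nonneg hs.1 hc0.le)
    calc (j:ℝ) * c ≤ (s/c) * c := by apply mul_le_mul_of_nonneg_right this hc0.le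
      _ = s := by field_simp
  have hsj : s - (j:ℝ)*c ≤ c := by
    have h1 : s / c < (j:ℝ) + 1 := Nat.lt_floor_add_one (s/c)
    have h2 : s < ((j:ℝ) + 1) * c := by
      rw [← div_lt_iff₀ hc0]; exact h1
    linarith
  have hyc : s - (j:ℝ)*c ∈ Icc (0:ℝ) (b - a) :=
    ⟨by linarith, le_trans hsj (min_le_left _ _)⟩
  have hjcnn : (0:ℝ) ≤ (j:ℝ)*c := by positivity
  have h1 := hP2 (s - (j:ℝ)*c) hyc (t + (j:ℝ)*c) (by linarith)
  have h2 := hT₂ t htT₂ j (Finset.mem_range.2 (Nat.lt_succ_of_le hjK))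
  have e1 : t + (j:ℝ)*c + (s - (j:ℝ)*c) = t + s := by ring
  rw [e1] at h1
  have e2 : h (t + s) - h t = (h (t + s) - h (t + (j:ℝ)*c)) + (h (t + (j:ℝ)*c) - h t) := by
    ring
  rw [e2]
  calc |(h (t + s) - h (t + (j:ℝ)*c)) + (h (t + (j:ℝ)*c) - h t)|
      ≤ |h (t + s) - h (t + (j:ℝ)*c)| + |h (t + (j:ℝ)*c) - h t| := abs_add_le _ _
    _ ≤ 2*(ε/3) + ε/3 := add_le_add h1 h2
    _ = ε := by ring

set_option maxHeartbeats 1000000 in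
theorem critical_minimal_solution_asymptotic (α : ℝ) (hα : α ∈ Set.Ioc (0:ℝ) 1)
    (L : ℝ → ℝ) (hLcont : ContinuousOn L (Set.Ioi (0:ℝ)))
    (hLpos : ∀ x > (0:ℝ), 0 < L x)
    (hLslow : ∀ a > (0:ℝ),
      Tendsto (fun x => L (a * x) / L x) (nhdsWithin 0 (Set.Ioi 0)) (nhds 1))
    (Ψ : ℝ → ℝ) (hΨ : ∀ x > (0:ℝ), Ψ x = x ^ ((1:ℝ) + α) * L x)
    (hint : IntegrableOn (fun x => 1 / Ψ x) (Set.Ioi (1:ℝ)))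
    (v : ℝ → ℝ) (hvpos : ∀ r > (0:ℝ), 0 < v r)
    (hvanti : StrictAntiOn v (Set.Ioi (0:ℝ)))
    (hode : ∀ r > (0:ℝ), HasDerivAt v (-Ψ (v r)) r)
    (hv0 : Tendsto v atTop (nhds 0))
    (hvinf : Tendsto v (nhdsWithin 0 (Set.Ioi 0)) atTop)
    (hvmin : ∀ r > (0:ℝ), ∫ x in Set.Ioi (v r), 1 / Ψ x = r) :
    Tendsto (fun r => (v r) ^ α * L (v r) * (α * r)) atTop (nhds 1) := by
  obtain ⟨hα0, hα1⟩ := hα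
  set F : ℝ → ℝ := fun u => ∫ x in Ioi u, 1 / Ψ x with hFdef
  have hΨpos : ∀ x, 0 < x → 0 < Ψ x := by
    intro x hx
    rw [hΨ x hx]
    exact mul_pos (Real.rpow_pos_of_pos hx _) (hLpos x hx)
  have hΨcontOn : ContinuousOn (fun x => 1 / Ψ x) (Ioi 0) := by
    have h1 : ContinuousOn (fun x : ℝ => 1 / (x ^ ((1:ℝ) + α) * L x)) (Ioi 0) := by
      apply ContinuousOn.div continuousOn_const
      · exact (continuousOn_id.rpow_const fun x hx => Or.inl (ne_of_gt hx)).mul hLcont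
      · intro x hx
        exact ne_of_gt (mul_pos (Real.rpow_pos_of_pos hx _) (hLpos x hx))
    exact h1.congr fun x hx => by rw [hΨ x hx]
  have hIntIoc : ∀ u d : ℝ, 0 < u → IntegrableOn (fun x => 1 / Ψ x) (Ioc u d) := by
    intro u d hu
    have h1 : ContinuousOn (fun x => 1 / Ψ x) (Icc u d) :=
      hΨcontOn.mono fun x hx => lt_of_lt_of_le hu hx.1
    exact h1.integrableOn_Icc.mono_set Ioc_subset_Icc_self
  have hInt : ∀ u : ℝ, 0 < u → IntegrableOn (fun x => 1 / Ψ x) (Ioi u) := by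
    intro u hu
    have hM : u ≤ max u 1 := le_max_left _ _
    have h2 : IntegrableOn (fun x => 1 / Ψ x) (Ioi (max u 1)) :=
      hint.mono_set (Ioi_subset_Ioi (le_max_right _ _))
    have := (hIntIoc u (max u 1) hu).union h2
    rwa [Ioc_union_Ioi_eq_Ioi hM] at this
  have hFsplit : ∀ u d : ℝ, 0 < u → u ≤ d → F u = (∫ x in Ioc u d, 1 / Ψ x) + F d := by
    intro u d hu hud
    have hd : (0:ℝ) < d := lt_of_lt_of_le hu hud
    rw [hFdef]
    simp only
    rw [← Ioc_union_Ioi_eq_Ioi hud,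
      setIntegral_union (Ioc_disjoint_Ioi le_rfl) measurableSet_Ioi (hIntIoc u d hu)
        (hInt d hd)]
  have hFnn : ∀ d : ℝ, 0 < d → 0 ≤ F d := by
    intro d hd
    apply setIntegral_nonneg measurableSet_Ioi
    intro x hx
    exact le_of_lt (one_div_pos.2 (hΨpos x (lt_trans hd hx)))
  set h : ℝ → ℝ := fun t => Real.log (L (Real.exp (-t))) with hhdef
  have hhc : Continuous h := by
    rw [continuous_iff_continuousAt]
    intro t
    have h1 : ContinuousAt L (Real.exp (-t)) :=
      hLcont.continuousAt (Ioi_mem_nhds (Real.exp_pos _))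
    have h2 : ContinuousAt Real.log (L (Real.exp (-t))) :=
      Real.continuousAt_log (ne_of_gt (hLpos _ (Real.exp_pos _)))
    have h3 : ContinuousAt (fun t : ℝ => Real.exp (-t)) t :=
      (Real.continuous_exp.comp continuous_neg).continuousAt
    exact ContinuousAt.comp (x := t) h2 (ContinuousAt.comp (x := t) h1 h3)
  have hhp : ∀ s ∈ Icc (0:ℝ) 2, Tendsto (fun t => h (t + s) - h t) atTop (nhds 0) := by
    intro s hs
    have ha : (0:ℝ) < Real.exp (-s) := Real.exp_pos _
    have hexp : Tendsto (fun t : ℝ => Real.exp (-t)) atTop (nhdsWithin 0 (Ioi 0)) := by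
      apply tendsto_nhdsWithin_of_tendsto_nhds_of_eventually_within
      · exact Real.tendsto_exp_neg_atTop_nhds_zero
      · exact Eventually.of_forall fun t => Real.exp_pos _
    have h1 := (hLslow (Real.exp (-s)) ha).comp hexp
    have h2 : Tendsto (fun t : ℝ => Real.log (L (Real.exp (-s) * Real.exp (-t)) /
        L (Real.exp (-t)))) atTop (nhds 0) := by
      have := (Real.continuousAt_log one_ne_zero).tendsto.comp h1
      simpa [Real.log_one, Function.comp_def] using this
    apply h2.congr
    intro t
    rw [Real.log_div (ne_of_gt (hLpos _ (by positivity))) (ne_of_gt (hLpos _ (Real.exp_pos _)))]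
    simp only [hhdef]
    rw [neg_add, Real.exp_add]
    ring_nf
  have hδgen : ∀ ε, 0 < ε → ∃ δ, 0 < δ ∧ ∀ x, 0 < x → x ≤ δ → ∀ a, 1/2 ≤ a → a ≤ 1 →
      |Real.log (L (a * x)) - Real.log (L x)| ≤ ε := by
    intro ε hε
    obtain ⟨T, hT⟩ := uct h hhc hhp ε hε
    refine ⟨Real.exp (-T), Real.exp_pos _, fun x hx hxδ a ha2 ha1 => ?_⟩
    have hsx : -Real.log x ≥ T := by
      have := Real.log_le_log_iff hx (Real.exp_pos _) |>.2 hxδ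
      rw [Real.log_exp] at this
      linarith
    have ha0 : 0 < a := lt_of_lt_of_le (by norm_num) ha2
    have hsa : -Real.log a ∈ Icc (0:ℝ) 1 := by
      constructor
      · simpa using Real.log_nonpos ha0.le ha1
      · have h2 : Real.log (1/2) ≤ Real.log a := Real.log_le_log (by norm_num) ha2
        rw [Real.log_div one_ne_zero two_ne_zero, Real.log_one] at h2
        have := Real.log_two_lt_d9
        linarith
    have key := hT (-Real.log x) hsx (-Real.log a) hsa
    simp only [hhdef] at key
    have e1 : Real.exp (-(-Real.log x + -Real.log a)) = a * x := by
      rw [show (-(-Real.log x + -Real.log a)) = Real.log x + Real.log a by ring,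
        Real.exp_add, Real.exp_log hx, Real.exp_log ha0]
      ring
    have e2 : Real.exp (-(-Real.log x)) = x := by rw [neg_neg, Real.exp_log hx]
    rw [e1, e2] at key
    exact key
  
  -- the key limit for G u = u^α L(u) (α F(u)) as u → 0+
  have hlog2 : (0:ℝ) < Real.log 2 := Real.log_pos one_lt_two
  have hcalc : ∀ p : ℝ, p ≠ -1 → ∀ u d : ℝ, 0 < u → u ≤ d →
      ∫ x in Ioc u d, x ^ p = (d^(p+1) - u^(p+1))/(p+1) := by
    intro p hp u d hu hud
    rw [← intervalIntegral.integral_of_le hud]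
    apply integral_rpow
    right
    refine ⟨hp, ?_⟩
    rw [Set.uIcc_of_le hud]
    rintro ⟨h0, -⟩
    linarith
  have hIntPow : ∀ (C p : ℝ) (u d : ℝ), 0 < u → IntegrableOn (fun x => C * x ^ p) (Ioc u d) := by
    intro C p u d hu
    have hco : ContinuousOn (fun x : ℝ => C * x ^ p) (Icc u d) :=
      continuousOn_const.mul (continuousOn_id.rpow_const fun x hx =>
        Or.inl (ne_of_gt (lt_of_lt_of_le hu hx.1)))
    exact hco.integrableOn_Icc.mono_set Ioc_subset_Icc_self
  have hG : Tendsto (fun u => u ^ α * L u * (α * F u)) (nhdsWithin 0 (Ioi 0)) (nhds 1) := by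
    rw [Metric.tendsto_nhds]
    intro ε₀ hε₀
    have hA : Tendsto (fun e : ℝ => α * Real.exp e / (α - e / Real.log 2)) (nhds 0) (nhds 1) := by
      have hca : ContinuousAt (fun e : ℝ => α * Real.exp e / (α - e / Real.log 2)) 0 := by
        apply ContinuousAt.div
        · exact continuousAt_const.mul Real.continuous_exp.continuousAt
        · exact continuousAt_const.sub (continuousAt_id.div_const _)
        · simpa using ne_of_gt hα0
      have h0 : α * Real.exp 0 / (α - 0 / Real.log 2) = 1 := by
        rw [Real.exp_zero]
        field_simp
        ring
      have := hca.tendsto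
      rwa [h0] at this
    have hB : Tendsto (fun e : ℝ => α * Real.exp (-e) / (α + e / Real.log 2)) (nhds 0) (nhds 1) := by
      have hca : ContinuousAt (fun e : ℝ => α * Real.exp (-e) / (α + e / Real.log 2)) 0 := by
        apply ContinuousAt.div
        · exact continuousAt_const.mul (Real.continuous_exp.continuousAt.comp
            (continuousAt_id.neg))
        · exact continuousAt_const.add (continuousAt_id.div_const _)
        · simpa using ne_of_gt hα0
      have h0 : α * Real.exp (-0) / (α + 0 / Real.log 2) = 1 := by
        rw [neg_zero, Real.exp_zero]
        field_simp
        ring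
      have := hca.tendsto
      rwa [h0] at this
    have evA : ∀ᶠ e in nhdsWithin 0 (Ioi (0:ℝ)),
        α * Real.exp e / (α - e / Real.log 2) < 1 + ε₀/2 :=
      (hA.mono_left nhdsWithin_le_nhds).eventually (gt_mem_nhds (by linarith))
    have evB : ∀ᶠ e in nhdsWithin 0 (Ioi (0:ℝ)),
        1 - ε₀/2 < α * Real.exp (-e) / (α + e / Real.log 2) :=
      (hB.mono_left nhdsWithin_le_nhds).eventually (lt_mem_nhds (by linarith))
    have evα : ∀ᶠ e in nhdsWithin 0 (Ioi (0:ℝ)), e / Real.log 2 < α := by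
      have hd : Tendsto (fun e : ℝ => e / Real.log 2) (nhds 0) (nhds 0) := by
        have := (continuousAt_id (x := (0:ℝ))).div_const (Real.log 2) |>.tendsto
        simpa using this
      exact (hd.mono_left nhdsWithin_le_nhds).eventually (gt_mem_nhds hα0)
    obtain ⟨ε, ⟨⟨hεA, hεB⟩, hεα⟩, hεpos⟩ :=
      (((evA.and evB).and evα).and self_mem_nhdsWithin).exists
    set η : ℝ := ε / Real.log 2 with hηdef
    have hη0 : 0 < η := div_pos hεpos hlog2
    have hηα : η < α := hεα
    clear_value η
    obtain ⟨δ, hδ0, hδ⟩ := hδgen ε hεpos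
    set δ' : ℝ := min δ 1 with hδ'def
    have hδ'0 : 0 < δ' := lt_min hδ0 one_pos
    have hδ'δ : δ' ≤ δ := min_le_left _ _
    clear_value δ'
    -- chaining lemma
    have hchain : ∀ n : ℕ, 1 ≤ n → ∀ u x : ℝ, 0 < u → u ≤ x → x ≤ δ → x ≤ 2^n * u →
        |Real.log (L x) - Real.log (L u)| ≤ n * ε := by
      intro n hn
      induction n, hn using Nat.le_induction with
      | base =>
        intro u x hu hux hxδ h2
        have hx0 : 0 < x := lt_of_lt_of_le hu hux
        rw [pow_one] at h2
        have ha2 : 1/2 ≤ u / x := by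
          rw [le_div_iff₀ hx0]; linarith
        have ha1 : u / x ≤ 1 := (div_le_one hx0).2 hux
        have hkey := hδ x hx0 hxδ (u/x) ha2 ha1
        rw [div_mul_cancel₀ u (ne_of_gt hx0), abs_sub_comm] at hkey
        simpa using hkey
      | succ n hn ih =>
        intro u x hu hux hxδ h2
        by_cases hx : x ≤ 2^n * u
        · have h3 := ih u x hu hux hxδ hx
          have h4 : (n:ℝ) * ε ≤ ((n:ℕ)+1 : ℕ) * ε := by
            push_cast; nlinarith
          push_cast at h4 ⊢
          linarith
        · push_neg at hx
          have hx0 : 0 < x := lt_of_lt_of_le hu hux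
          have h2n : (2:ℝ) ≤ 2^n := by
            calc (2:ℝ) = 2^1 := (pow_one 2).symm
            _ ≤ 2^n := pow_le_pow_right₀ one_le_two hn
          have huy : u ≤ x/2 := by nlinarith
          have hyδ : x/2 ≤ δ := by linarith
          have hy2 : x/2 ≤ 2^n * u := by
            rw [pow_succ] at h2
            linarith
          have hstep := hδ x hx0 hxδ (1/2) le_rfl (by norm_num)
          rw [show (1/2 : ℝ) * x = x/2 by ring] at hstep
          have hih := ih u (x/2) hu huy hyδ hy2
          calc |Real.log (L x) - Real.log (L u)|
              ≤ |Real.log (L x) - Real.log (L (x/2))| +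
                |Real.log (L (x/2)) - Real.log (L u)| := abs_sub_le _ _ _
            _ ≤ ε + n * ε := add_le_add (by rwa [abs_sub_comm] at hstep) hih
            _ = ((n:ℕ)+1 : ℕ) * ε := by push_cast; ring
    -- Potter bound
    have hpotter : ∀ u x : ℝ, 0 < u → u ≤ x → x ≤ δ →
        |Real.log (L x) - Real.log (L u)| ≤ ε + η * Real.log (x/u) := by
      intro u x hu hux hxδ
      set n : ℕ := ⌊Real.logb 2 (x/u)⌋₊ + 1 with hndef
      have hx0 : 0 < x := lt_of_lt_of_le hu hux
      have hxu1 : 1 ≤ x/u := (one_le_div hu).2 hux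
      have hlb0 : 0 ≤ Real.logb 2 (x/u) := Real.logb_nonneg one_lt_two hxu1
      have h2n : x ≤ 2^n * u := by
        have h1 : Real.logb 2 (x/u) < (n:ℝ) := by
          have := Nat.lt_floor_add_one (Real.logb 2 (x/u))
          rw [hndef]; push_cast; linarith
        have h2 : x/u ≤ (2:ℝ)^(n:ℝ) := by
          calc x/u = (2:ℝ) ^ Real.logb 2 (x/u) :=
                (Real.rpow_logb two_pos (by norm_num) (by positivity)).symm
            _ ≤ (2:ℝ)^(n:ℝ) := Real.rpow_le_rpow_of_exponent_le one_le_two h1.le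
        rw [Real.rpow_natCast] at h2
        calc x = (x/u) * u := by field_simp
          _ ≤ 2^n * u := mul_le_mul_of_nonneg_right h2 hu.le
      have hch := hchain n (Nat.le_add_left 1 _) u x hu hux hxδ h2n
      have hn' : (n:ℝ) ≤ Real.logb 2 (x/u) + 1 := by
        rw [hndef]; push_cast
        linarith [Nat.floor_le hlb0]
      calc |Real.log (L x) - Real.log (L u)| ≤ (n:ℝ) * ε := hch
        _ ≤ (Real.logb 2 (x/u) + 1) * ε := by nlinarith
        _ = ε + η * Real.log (x/u) := by rw [Real.logb, hηdef]; ring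
    -- exponential (Potter) forms
    have hLup : ∀ u x : ℝ, 0 < u → u ≤ x → x ≤ δ →
        L x ≤ L u * Real.exp ε * (x/u)^η := by
      intro u x hu hux hxδ
      have hx0 : 0 < x := lt_of_lt_of_le hu hux
      have h1 := (abs_le.1 (hpotter u x hu hux hxδ)).2
      calc L x = Real.exp (Real.log (L x)) := (Real.exp_log (hLpos x hx0)).symm
        _ ≤ Real.exp (Real.log (L u) + (ε + η * Real.log (x/u))) :=
            Real.exp_le_exp.2 (by linarith)
        _ = L u * Real.exp ε * (x/u)^η := by
            rw [Real.exp_add, Real.exp_add, Real.exp_log (hLpos u hu),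
              Real.rpow_def_of_pos (by positivity : (0:ℝ) < x/u),
              mul_comm (Real.log (x/u)) η]
            ring
    have hLlow : ∀ u x : ℝ, 0 < u → u ≤ x → x ≤ δ →
        L u * Real.exp (-ε) * (u/x)^η ≤ L x := by
      intro u x hu hux hxδ
      have hx0 : 0 < x := lt_of_lt_of_le hu hux
      have h1 := (abs_le.1 (hpotter u x hu hux hxδ)).1
      have hlux : Real.log (u/x) = - Real.log (x/u) := by
        rw [show u/x = (x/u)⁻¹ by rw [inv_div], Real.log_inv]
      calc L u * Real.exp (-ε) * (u/x)^η
          = Real.exp (Real.log (L u) + (-ε + η * Real.log (u/x))) := by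
            rw [Real.exp_add, Real.exp_add, Real.exp_log (hLpos u hu),
              Real.rpow_def_of_pos (by positivity : (0:ℝ) < u/x),
              mul_comm (Real.log (u/x)) η]
            ring
        _ ≤ Real.exp (Real.log (L x)) := by
            apply Real.exp_le_exp.2
            rw [hlux]
            linarith
        _ = L x := Real.exp_log (hLpos x hx0)
    -- pointwise bounds on the integrand
    have hptUp : ∀ u : ℝ, 0 < u → ∀ x ∈ Ioc u δ',
        1/Ψ x ≤ (Real.exp ε / (L u * u^η)) * x ^ (η - 1 - α) := by
      intro u hu x hx
      have hx0 : 0 < x := lt_trans hu hx.1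
      have hxδ : x ≤ δ := le_trans hx.2 hδ'δ
      have hlow := hLlow u x hu hx.1.le hxδ
      have hLu := hLpos u hu
      have hLx := hLpos x hx0
      have hA : (0:ℝ) < x ^ ((1:ℝ)+α) := Real.rpow_pos_of_pos hx0 _
      have hxη : (0:ℝ) < x ^ η := Real.rpow_pos_of_pos hx0 _
      have huη : (0:ℝ) < u ^ η := Real.rpow_pos_of_pos hu _
      have hkey : 1 ≤ (Real.exp ε / (L u * u^η)) * x^η * L x := by
        have hLu' : L u ≠ 0 := ne_of_gt hLu
        have huη' : u^η ≠ 0 := ne_of_gt huη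
        have hxη' : x^η ≠ 0 := ne_of_gt hxη
        have h2 : (Real.exp ε / (L u * u^η)) * x^η * (L u * Real.exp (-ε) * (u/x)^η) = 1 := by
          rw [Real.div_rpow hu.le hx0.le, Real.exp_neg]
          field_simp
        calc (1:ℝ) = (Real.exp ε / (L u * u^η)) * x^η * (L u * Real.exp (-ε) * (u/x)^η) :=
              h2.symm
          _ ≤ (Real.exp ε / (L u * u^η)) * x^η * L x :=
              mul_le_mul_of_nonneg_left hlow (by positivity)
      rw [hΨ x hx0]
      have hxpow : x ^ (η - 1 - α) = x ^ η / x ^ ((1:ℝ)+α) := by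
        rw [← Real.rpow_sub hx0]; congr 1; ring
      rw [hxpow, ← mul_div_assoc, div_le_div_iff₀ (by positivity) hA]
      have hmul := mul_le_mul_of_nonneg_right hkey hA.le
      exact hmul.trans_eq (by ring)
    have hptLow : ∀ u : ℝ, 0 < u → ∀ x ∈ Ioc u δ',
        (Real.exp (-ε) * u^η / L u) * x ^ (-η - 1 - α) ≤ 1/Ψ x := by
      intro u hu x hx
      have hx0 : 0 < x := lt_trans hu hx.1
      have hxδ : x ≤ δ := le_trans hx.2 hδ'δ
      have hup := hLup u x hu hx.1.le hxδ
      have hLu := hLpos u hu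
      have hLx := hLpos x hx0
      have hA : (0:ℝ) < x ^ ((1:ℝ)+α) := Real.rpow_pos_of_pos hx0 _
      have hxη : (0:ℝ) < x ^ η := Real.rpow_pos_of_pos hx0 _
      have huη : (0:ℝ) < u ^ η := Real.rpow_pos_of_pos hu _
      have hkey : (Real.exp (-ε) * u^η / L u) * x^(-η) * L x ≤ 1 := by
        have hLu' : L u ≠ 0 := ne_of_gt hLu
        have huη' : u^η ≠ 0 := ne_of_gt huη
        have hxη' : x^η ≠ 0 := ne_of_gt hxη
        have h2 : (Real.exp (-ε) * u^η / L u) * x^(-η) * (L u * Real.exp ε * (x/u)^η) = 1 := by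
          rw [Real.div_rpow hx0.le hu.le, Real.exp_neg, Real.rpow_neg hx0.le]
          field_simp
        calc (Real.exp (-ε) * u^η / L u) * x^(-η) * L x
            ≤ (Real.exp (-ε) * u^η / L u) * x^(-η) * (L u * Real.exp ε * (x/u)^η) := by
              apply mul_le_mul_of_nonneg_left hup
              have : (0:ℝ) < x ^ (-η) := Real.rpow_pos_of_pos hx0 _
              positivity
          _ = 1 := h2
      rw [hΨ x hx0]
      have hxpow : x ^ (-η - 1 - α) = x ^ (-η) / x ^ ((1:ℝ)+α) := by
        rw [← Real.rpow_sub hx0]; congr 1; ring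
      rw [hxpow, ← mul_div_assoc, div_le_div_iff₀ hA (by positivity)]
      have hmul := mul_le_mul_of_nonneg_right hkey hA.le
      exact le_trans (le_of_eq (by ring)) hmul
    -- the two key inequalities
    have hKEY1 : ∀ u : ℝ, 0 < u → u ≤ δ' →
        u ^ α * L u * (α * F u) ≤ α * Real.exp ε / (α - η) + u ^ α * L u * (α * F δ') := by
      intro u hu huδ'
      have hLu := hLpos u hu
      have huη : (0:ℝ) < u ^ η := Real.rpow_pos_of_pos hu _
      have huα : (0:ℝ) < u ^ α := Real.rpow_pos_of_pos hu _
      set C : ℝ := Real.exp ε / (L u * u^η) with hCdef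
      have hCpos : 0 < C := by rw [hCdef]; positivity
      have hmono : ∫ x in Ioc u δ', 1/Ψ x ≤ ∫ x in Ioc u δ', C * x ^ (η - 1 - α) :=
        setIntegral_mono_on (hIntIoc u δ' hu) (hIntPow C _ u δ' hu) measurableSet_Ioc
          (fun x hx => hptUp u hu x hx)
      have hne : η - 1 - α ≠ -1 := by
        intro hc
        have : η = α := by linarith
        linarith
      have hci : ∫ x in Ioc u δ', C * x ^ (η-1-α) = C * ((δ'^(η-α) - u^(η-α))/(η-α)) := by
        rw [integral_const_mul, hcalc (η-1-α) hne u δ' hu huδ',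
          show η-1-α+1 = η-α by ring]
      have hbr : (δ'^(η-α) - u^(η-α))/(η-α) ≤ u^(η-α)/(α-η) := by
        have h1 : (δ'^(η-α) - u^(η-α))/(η-α) = (u^(η-α) - δ'^(η-α))/(α-η) := by
          rw [show η - α = -(α-η) by ring, div_neg]; ring
        rw [h1]
        apply (div_le_div_iff_of_pos_right (by linarith)).2
        have : (0:ℝ) ≤ δ'^(η-α) := Real.rpow_nonneg hδ'0.le _
        linarith
      have hpow : u ^ α * u ^ (η - α) = u ^ η := by
        rw [← Real.rpow_add hu]; congr 1; ring
      have hid : u ^ α * L u * (α * (C * (u^(η-α)/(α-η)))) = α * Real.exp ε/(α-η) := by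
        rw [hCdef]
        obtain ⟨d, hd⟩ : ∃ d : ℝ, α - η = d := ⟨_, rfl⟩
        have hd0 : (0:ℝ) < d := by rw [← hd]; linarith
        rw [hd]
        have h1 : u ^ α * L u * (α * (Real.exp ε / (L u * u^η) * (u^(η-α)/d))) =
            (u ^ α * u ^ (η-α)) * L u * α * Real.exp ε / (L u * u^η * d) := by ring
        rw [h1, hpow]
        rw [div_eq_div_iff (ne_of_gt (mul_pos (mul_pos hLu huη) hd0)) (ne_of_gt hd0)]
        ring
      rw [hFsplit u δ' hu huδ']
      have hfac : (0:ℝ) ≤ u ^ α * L u := mul_nonneg huα.le hLu.le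
      have hstep : u ^ α * L u * (α * (∫ x in Ioc u δ', 1/Ψ x)) ≤ α * Real.exp ε/(α-η) := by
        calc u ^ α * L u * (α * (∫ x in Ioc u δ', 1/Ψ x))
            ≤ u ^ α * L u * (α * (C * ((δ'^(η-α) - u^(η-α))/(η-α)))) := by
              rw [← hci]
              exact mul_le_mul_of_nonneg_left (mul_le_mul_of_nonneg_left hmono hα0.le) hfac
          _ ≤ u ^ α * L u * (α * (C * (u^(η-α)/(α-η)))) := by
              apply mul_le_mul_of_nonneg_left _ hfac
              apply mul_le_mul_of_nonneg_left _ hα0.le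
              exact mul_le_mul_of_nonneg_left hbr hCpos.le
          _ = α * Real.exp ε/(α-η) := hid
      have hexpand : u ^ α * L u * (α * ((∫ x in Ioc u δ', 1/Ψ x) + F δ')) =
          u ^ α * L u * (α * (∫ x in Ioc u δ', 1/Ψ x)) + u ^ α * L u * (α * F δ') := by
        ring
      rw [hexpand]
      linarith
    have hKEY2 : ∀ u : ℝ, 0 < u → u ≤ δ' →
        α * Real.exp (-ε)/(α+η) - α * Real.exp (-ε)/(α+η) * (u/δ')^(α+η) ≤
          u ^ α * L u * (α * F u) := by
      intro u hu huδ'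
      have hLu := hLpos u hu
      have huη : (0:ℝ) < u ^ η := Real.rpow_pos_of_pos hu _
      have huα : (0:ℝ) < u ^ α := Real.rpow_pos_of_pos hu _
      set C₂ : ℝ := Real.exp (-ε) * u^η / L u with hC₂def
      have hC₂pos : 0 < C₂ := by rw [hC₂def]; positivity
      have hmono : ∫ x in Ioc u δ', C₂ * x ^ (-η - 1 - α) ≤ ∫ x in Ioc u δ', 1/Ψ x :=
        setIntegral_mono_on (hIntPow C₂ _ u δ' hu) (hIntIoc u δ' hu) measurableSet_Ioc
          (fun x hx => hptLow u hu x hx)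
      have hne : -η - 1 - α ≠ -1 := by
        intro hc
        have : η = -α := by linarith
        linarith
      have hci : ∫ x in Ioc u δ', C₂ * x ^ (-η-1-α) =
          C₂ * ((δ'^(-η-α) - u^(-η-α))/(-η-α)) := by
        rw [integral_const_mul, hcalc (-η-1-α) hne u δ' hu huδ',
          show -η-1-α+1 = -η-α by ring]
      have hpow1 : u ^ α * u ^ η * u ^ (-η-α) = 1 := by
        rw [← Real.rpow_add hu, ← Real.rpow_add hu, show α + η + (-η-α) = 0 by ring,
          Real.rpow_zero]
      have hpow2 : u ^ α * u ^ η * δ'^(-η-α) = (u/δ')^(α+η) := by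
        rw [Real.div_rpow hu.le hδ'0.le, ← Real.rpow_add hu,
          show -η-α = -(α+η) by ring, Real.rpow_neg hδ'0.le, div_eq_mul_inv]
      have hid : u ^ α * L u * (α * (C₂ * ((δ'^(-η-α) - u^(-η-α))/(-η-α)))) =
          α * Real.exp (-ε)/(α+η) - α * Real.exp (-ε)/(α+η) * (u/δ')^(α+η) := by
        rw [hC₂def]
        have h2 : (δ'^(-η-α) - u^(-η-α))/(-η-α) = (u^(-η-α) - δ'^(-η-α))/(η+α) := by
          rw [show -η-α = -(η+α) by ring, div_neg]; ring
        rw [h2]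
        calc u ^ α * L u * (α * ((Real.exp (-ε) * u^η / L u) *
              ((u^(-η-α) - δ'^(-η-α))/(η+α))))
            = (α * Real.exp (-ε) * (u^α * u^η * u^(-η-α)) -
                α * Real.exp (-ε) * (u^α * u^η * δ'^(-η-α))) * (L u / L u) / (η+α) := by
              ring
          _ = (α * Real.exp (-ε) * 1 - α * Real.exp (-ε) * (u/δ')^(α+η)) * 1 / (η+α) := by
              rw [hpow1, hpow2, div_self (ne_of_gt hLu)]
          _ = α * Real.exp (-ε)/(α+η) - α * Real.exp (-ε)/(α+η) * (u/δ')^(α+η) := by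
              ring
      have hfac : (0:ℝ) ≤ u ^ α * L u := mul_nonneg huα.le hLu.le
      have hFu : (∫ x in Ioc u δ', 1/Ψ x) ≤ F u := by
        rw [hFsplit u δ' hu huδ']
        linarith [hFnn δ' hδ'0]
      calc α * Real.exp (-ε)/(α+η) - α * Real.exp (-ε)/(α+η) * (u/δ')^(α+η)
          = u ^ α * L u * (α * (C₂ * ((δ'^(-η-α) - u^(-η-α))/(-η-α)))) := hid.symm
        _ = u ^ α * L u * (α * (∫ x in Ioc u δ', C₂ * x ^ (-η-1-α))) := by rw [hci]
        _ ≤ u ^ α * L u * (α * (∫ x in Ioc u δ', 1/Ψ x)) :=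
            mul_le_mul_of_nonneg_left (mul_le_mul_of_nonneg_left hmono hα0.le) hfac
        _ ≤ u ^ α * L u * (α * F u) :=
            mul_le_mul_of_nonneg_left (mul_le_mul_of_nonneg_left hFu hα0.le) hfac
    -- tail tends to zero
    have hUL : Tendsto (fun u => u ^ α * L u) (nhdsWithin 0 (Ioi 0)) (nhds 0) := by
      have hbound : ∀ u : ℝ, u ∈ Ioc 0 δ' →
          u ^ α * L u ≤ (Real.exp ε * L δ' * δ'^η) * u^(α-η) := by
        intro u hu
        have hu0 : 0 < u := hu.1
        have hlow := hLlow u δ' hu0 hu.2 hδ'δ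
        have hposδu : (0:ℝ) < (δ'/u)^η := Real.rpow_pos_of_pos (by positivity) _
        have h2 : (u/δ')^η * (δ'/u)^η = 1 := by
          rw [← Real.mul_rpow (by positivity) (by positivity),
            show u/δ' * (δ'/u) = 1 by field_simp, Real.one_rpow]
        have h1 : L u ≤ Real.exp ε * L δ' * (δ'/u)^η := by
          have h3 := mul_le_mul_of_nonneg_right hlow
            (le_of_lt (mul_pos (Real.exp_pos ε) hposδu))
          have h4 : L u * Real.exp (-ε) * (u/δ')^η * (Real.exp ε * (δ'/u)^η) = L u := by
            have h5 : Real.exp (-ε) * Real.exp ε = 1 := by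
              rw [← Real.exp_add]; simp
            calc L u * Real.exp (-ε) * (u/δ')^η * (Real.exp ε * (δ'/u)^η)
                = L u * (Real.exp (-ε) * Real.exp ε) * ((u/δ')^η * (δ'/u)^η) := by ring
              _ = L u := by rw [h5, h2]; ring
          rw [h4] at h3
          exact h3.trans_eq (by ring)
        calc u ^ α * L u ≤ u ^ α * (Real.exp ε * L δ' * (δ'/u)^η) :=
              mul_le_mul_of_nonneg_left h1 (Real.rpow_nonneg hu0.le _)
          _ = (Real.exp ε * L δ' * δ'^η) * u^(α-η) := by
              rw [Real.div_rpow hδ'0.le hu0.le, Real.rpow_sub hu0]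
              ring
      have hpow0 : Tendsto (fun u : ℝ => u ^ (α-η)) (nhdsWithin 0 (Ioi 0)) (nhds 0) := by
        have hc : ContinuousAt (fun u:ℝ => u^(α-η)) 0 :=
          Real.continuousAt_rpow_const 0 _ (Or.inr (by linarith))
        have h6 : Tendsto (fun u:ℝ => u^(α-η)) (nhdsWithin 0 (Ioi 0))
            (nhds ((0:ℝ)^(α-η))) := hc.tendsto.mono_left nhdsWithin_le_nhds
        rwa [Real.zero_rpow (ne_of_gt (by linarith : (0:ℝ) < α - η))] at h6
      apply squeeze_zero'
      · filter_upwards [self_mem_nhdsWithin] with u hu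
        rw [mem_Ioi] at hu
        exact mul_nonneg (Real.rpow_nonneg hu.le _) (hLpos u hu).le
      · filter_upwards [Ioc_mem_nhdsGT_of_mem ⟨le_refl (0:ℝ), hδ'0⟩] with u hu
        exact hbound u hu
      · simpa using hpow0.const_mul (Real.exp ε * L δ' * δ'^η)
    have hTAIL : Tendsto (fun u => u ^ α * L u * (α * F δ')) (nhdsWithin 0 (Ioi 0))
        (nhds 0) := by
      simpa using hUL.mul_const (α * F δ')
    have hW : Tendsto (fun u : ℝ => α * Real.exp (-ε)/(α+η) * (u/δ')^(α+η))
        (nhdsWithin 0 (Ioi 0)) (nhds 0) := by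
      have h1 : ContinuousAt (fun u:ℝ => u/δ') 0 := continuousAt_id.div_const _
      have h2 : ContinuousAt (fun y:ℝ => y^(α+η)) ((fun u:ℝ => u/δ') 0) := by
        simp only [zero_div]
        exact Real.continuousAt_rpow_const 0 _ (Or.inr (by linarith))
      have hc := ContinuousAt.comp (x := (0:ℝ)) h2 h1
      have hc' : Tendsto (fun u:ℝ => (u/δ')^(α+η)) (nhdsWithin 0 (Ioi 0))
          (nhds (((0:ℝ)/δ')^(α+η))) := hc.tendsto.mono_left nhdsWithin_le_nhds
      have h3 := hc'.const_mul (α * Real.exp (-ε)/(α+η))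
      have h0 : ((0:ℝ)/δ')^(α+η) = 0 := by
        rw [zero_div, Real.zero_rpow (ne_of_gt (by linarith : (0:ℝ) < α + η))]
      rw [h0, mul_zero] at h3
      exact h3
    have hAA1 : α * Real.exp ε / (α - η) < 1 + ε₀/2 := hεA
    have hBB1 : 1 - ε₀/2 < α * Real.exp (-ε)/(α+η) := hεB
    have evTail : ∀ᶠ u in nhdsWithin 0 (Ioi (0:ℝ)),
        u^α * L u * (α * F δ') < 1 + ε₀ - α * Real.exp ε/(α-η) :=
      hTAIL.eventually (gt_mem_nhds (by linarith))
    have evW : ∀ᶠ u in nhdsWithin 0 (Ioi (0:ℝ)),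
        α * Real.exp (-ε)/(α+η) * (u/δ')^(α+η) < α * Real.exp (-ε)/(α+η) - 1 + ε₀ :=
      hW.eventually (gt_mem_nhds (by linarith))
    filter_upwards [evTail, evW, Ioc_mem_nhdsGT_of_mem ⟨le_refl (0:ℝ), hδ'0⟩]
      with u h1 h2 hu
    have hk1 := hKEY1 u hu.1 hu.2
    have hk2 := hKEY2 u hu.1 hu.2
    rw [Real.dist_eq, abs_lt]
    constructor
    · linarith
    · linarith
  have hvt : Tendsto v atTop (nhdsWithin 0 (Ioi 0)) := by
    apply tendsto_nhdsWithin_of_tendsto_nhds_of_eventually_within _ hv0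
    filter_upwards [eventually_gt_atTop 0] with r hr
    exact hvpos r hr
  have hcomp := hG.comp hvt
  apply Tendsto.congr' _ hcomp
  filter_upwards [eventually_gt_atTop 0] with r hr
  simp only [Function.comp_apply, hFdef]
  rw [hvmin r hr]
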